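/- Suppose K ∈ ℝ^{m×n} is such that A + BK is Hurwitz and P ∈ ℝ^{n×n} is symmetric and satisfies (A+BK)ᵀP + P(A+BK) + Q + KᵀRK = 0. Then the difference P̃ := P − P⋆ satisfies the Lyapunov equation (A+BK)ᵀP̃ + P̃(A+BK) + (K−K⋆)ᵀR(K−K⋆) = 0, and consequently P ⪰ P⋆. -/

import Mathlib

open Matrix MeasureTheory

/-- Spectral (ℓ² operator) norm of a real matrix. -/
noncomputable def specNorm {p q : Type*} [Fintype p] [Fintype q] [DecidableEq q]
    (M : Matrix p q ℝ) : ℝ :=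
  ‖LinearMap.toContinuousLinearMap (Matrix.toEuclideanLin M)‖

/-- A real square matrix is Hurwitz if all of its eigenvalues over ℂ have negative real part. -/
def IsHurwitz {k : Type*} [Fintype k] [DecidableEq k] (M : Matrix k k ℝ) : Prop :=
  ∀ μ ∈ spectrum ℂ (M.map (Complex.ofReal ·)), μ.re < 0

/-- Smallest (real) eigenvalue of a real matrix. -/
noncomputable def lamMin {k : Type*} [Fintype k] [DecidableEq k] (X : Matrix k k ℝ) : ℝ :=
  sInf (spectrum ℝ X)

/-- Largest (real) eigenvalue of a real matrix. -/
noncomputable def lamMax {k : Type*} [Fintype k] [DecidableEq k] (X : Matrix k k ℝ) : ℝ :=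
  sSup (spectrum ℝ X)

open Filter NormedSpace

attribute [local instance] Matrix.linftyOpNormedAddCommGroup Matrix.linftyOpNormedRing
  Matrix.linftyOpNormedAlgebra

-- polynomial times decaying exponential
lemma poly_exp_decay (c : ℝ) (hc : c < 0) (j : ℕ) :
    Tendsto (fun t : ℝ => t ^ j * Real.exp (c * t)) atTop (nhds 0) := by
  have h0 : (0:ℝ) < -c := by linarith
  have h1 : Tendsto (fun t : ℝ => (-c) * t) atTop atTop :=
    Tendsto.const_mul_atTop h0 tendsto_id
  have h2 : Tendsto (fun t : ℝ => ((-c) * t) ^ j * Real.exp (-((-c) * t))) atTop (nhds 0) :=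
    (Real.tendsto_pow_mul_exp_neg_atTop_nhds_zero j).comp h1
  have h3 := h2.const_mul (((-c) ^ j)⁻¹)
  rw [mul_zero] at h3
  refine h3.congr fun t => ?_
  have : -((-c) * t) = c * t := by ring
  rw [this, mul_pow, ← mul_assoc, ← mul_assoc, inv_mul_cancel₀ (by positivity), one_mul]

open NormedSpace in
lemma complex_decay {n : ℕ} (Mc : Matrix (Fin n) (Fin n) ℂ)
    (hM : ∀ μ ∈ spectrum ℂ Mc, μ.re < 0) (w : Fin n → ℂ) :
    Tendsto (fun t : ℝ => (exp (t • Mc)) *ᵥ w) atTop (nhds 0) := by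
  have hw : w ∈ ⨆ μ : ℂ, Module.End.maxGenEigenspace (Matrix.toLinAlgEquiv' Mc) μ := by
    rw [Module.End.iSup_maxGenEigenspace_eq_top]; trivial
  refine Submodule.iSup_induction (motive := fun x =>
      Tendsto (fun t : ℝ => (exp (t • Mc)) *ᵥ x) atTop (nhds 0)) _ hw ?_ ?_ ?_
  · -- generalized eigenvector case
    intro μ x hx
    obtain ⟨k, hk⟩ := (Module.End.mem_maxGenEigenspace _ _ _).mp hx
    by_cases hx0 : x = 0
    · simpa [hx0] using tendsto_const_nhds
    have hgen : Module.End.HasGenEigenvalue (Matrix.toLinAlgEquiv' Mc) μ k := by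
      rw [Module.End.hasGenEigenvalue_iff]
      rw [Submodule.ne_bot_iff]
      exact ⟨x, Module.End.mem_genEigenspace_nat.mpr hk, hx0⟩
    have hμ : μ.re < 0 := by
      have hsp : μ ∈ spectrum ℂ (Matrix.toLinAlgEquiv' Mc) :=
        Module.End.hasEigenvalue_iff_mem_spectrum.mp
          (Module.End.hasEigenvalue_of_hasGenEigenvalue hgen)
      rw [AlgEquiv.spectrum_eq] at hsp
      exact hM μ hsp
    set N : Matrix (Fin n) (Fin n) ℂ := Mc - μ • 1 with hN
    have hNk : N ^ k *ᵥ x = 0 := by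
      have h1 : (Matrix.toLinAlgEquiv' (N ^ k)) x = 0 := by
        rw [map_pow, map_sub, _root_.map_smul, _root_.map_one]; exact hk
      rwa [Matrix.toLinAlgEquiv'_apply] at h1
    have hNj : ∀ j, k ≤ j → N ^ j *ᵥ x = 0 := by
      intro j hj
      rw [← Nat.sub_add_cancel hj, pow_add, ← Matrix.mulVec_mulVec, hNk, Matrix.mulVec_zero]
    -- the exponential formula on the generalized eigenspace
    have key : ∀ t : ℝ, exp (t • Mc) *ᵥ x
        = Complex.exp ((t : ℂ) * μ) •
            ∑ j ∈ Finset.range k, (((j.factorial : ℝ))⁻¹ * t ^ j) • (N ^ j *ᵥ x) := by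
      intro t
      letI : SeminormedRing (Matrix (Fin n) (Fin n) ℂ) := Matrix.linftyOpSemiNormedRing
      letI : NormedRing (Matrix (Fin n) (Fin n) ℂ) := Matrix.linftyOpNormedRing
      letI : NormedAlgebra ℝ (Matrix (Fin n) (Fin n) ℂ) := Matrix.linftyOpNormedAlgebra
      letI : NormedAlgebra ℂ (Matrix (Fin n) (Fin n) ℂ) := Matrix.linftyOpNormedAlgebra
      have hsplit : t • Mc = ((t : ℂ) * μ) • (1 : Matrix (Fin n) (Fin n) ℂ) + t • N := by
        rw [← Complex.real_smul, smul_assoc, ← smul_add, hN]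
        congr 1
        abel
      have hcomm : Commute (((t : ℂ) * μ) • (1 : Matrix (Fin n) (Fin n) ℂ)) (t • N) :=
        (Commute.one_left (t • N)).smul_left ((t : ℂ) * μ)
      have hadd : exp (t • Mc)
          = exp (((t : ℂ) * μ) • (1 : Matrix (Fin n) (Fin n) ℂ)) * exp (t • N) := by
        rw [hsplit]
        exact exp_add_of_commute hcomm
      have hscal : exp (((t : ℂ) * μ) • (1 : Matrix (Fin n) (Fin n) ℂ))
          = Complex.exp ((t : ℂ) * μ) • (1 : Matrix (Fin n) (Fin n) ℂ) := by
        calc exp (((t : ℂ) * μ) • (1 : Matrix (Fin n) (Fin n) ℂ))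
            = exp (algebraMap ℂ (Matrix (Fin n) (Fin n) ℂ) ((t : ℂ) * μ)) := by
              rw [Algebra.algebraMap_eq_smul_one]
          _ = algebraMap ℂ (Matrix (Fin n) (Fin n) ℂ) (exp ((t : ℂ) * μ)) :=
              (map_exp (algebraMap ℂ (Matrix (Fin n) (Fin n) ℂ))
                (continuous_algebraMap _ _) _).symm
          _ = Complex.exp ((t : ℂ) * μ) • (1 : Matrix (Fin n) (Fin n) ℂ) := by
              rw [Algebra.algebraMap_eq_smul_one]
              congr 1
              rw [← Complex.exp_eq_exp_ℂ]
      have hser : exp (t • N) *ᵥ x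
          = ∑ j ∈ Finset.range k, (((j.factorial : ℝ))⁻¹ * t ^ j) • (N ^ j *ᵥ x) := by
        let L : Matrix (Fin n) (Fin n) ℂ →ₗ[ℝ] (Fin n → ℂ) :=
          { toFun := fun E => E *ᵥ x
            map_add' := fun a b => Matrix.add_mulVec a b x
            map_smul' := fun r E => Matrix.smul_mulVec r E x }
        let Lc : Matrix (Fin n) (Fin n) ℂ →L[ℝ] (Fin n → ℂ) :=
          LinearMap.toContinuousLinearMap L
        have hsum : Summable (fun j : ℕ => ((j.factorial : ℝ))⁻¹ • (t • N) ^ j) :=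
          expSeries_summable' (𝕂 := ℝ) (t • N)
        calc exp (t • N) *ᵥ x = Lc (exp (t • N)) := rfl
          _ = Lc (∑' j : ℕ, ((j.factorial : ℝ))⁻¹ • (t • N) ^ j) := by rw [exp_eq_tsum ℝ]
          _ = ∑' j : ℕ, Lc (((j.factorial : ℝ))⁻¹ • (t • N) ^ j) := Lc.map_tsum hsum
          _ = ∑' j : ℕ, (((j.factorial : ℝ))⁻¹ * t ^ j) • (N ^ j *ᵥ x) := by
              refine tsum_congr fun j => ?_
              have : Lc ((t • N) ^ j) = t ^ j • (N ^ j *ᵥ x) := by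
                show ((t • N) ^ j) *ᵥ x = t ^ j • (N ^ j *ᵥ x)
                rw [smul_pow]
                exact Matrix.smul_mulVec (t ^ j) (N ^ j) x
              rw [Lc.map_smul, this, smul_smul]
          _ = ∑ j ∈ Finset.range k, (((j.factorial : ℝ))⁻¹ * t ^ j) • (N ^ j *ᵥ x) := by
              refine tsum_eq_sum fun j hj => ?_
              rw [hNj j (by simpa using hj), smul_zero]
      rw [hadd, hscal, ← Matrix.mulVec_mulVec, hser, Matrix.smul_mulVec,
        Matrix.one_mulVec]
    -- squeeze against a polynomial-times-decaying-exponential bound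
    have hbound : ∀ᶠ t : ℝ in atTop, ‖exp (t • Mc) *ᵥ x‖
        ≤ ∑ j ∈ Finset.range k,
            (((j.factorial : ℝ))⁻¹ * ‖N ^ j *ᵥ x‖) * (t ^ j * Real.exp (μ.re * t)) := by
      filter_upwards [eventually_ge_atTop (0 : ℝ)] with t ht
      rw [key t, norm_smul]
      have hne : ‖Complex.exp ((t : ℂ) * μ)‖ = Real.exp (μ.re * t) := by
        rw [Complex.norm_exp]
        congr 1
        simp [Complex.mul_re]
        ring
      rw [hne]
      calc Real.exp (μ.re * t) * ‖∑ j ∈ Finset.range k,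
              (((j.factorial : ℝ))⁻¹ * t ^ j) • (N ^ j *ᵥ x)‖
          ≤ Real.exp (μ.re * t) * ∑ j ∈ Finset.range k,
              ‖(((j.factorial : ℝ))⁻¹ * t ^ j) • (N ^ j *ᵥ x)‖ := by
            exact mul_le_mul_of_nonneg_left (norm_sum_le _ _) (Real.exp_nonneg _)
        _ = ∑ j ∈ Finset.range k,
              (((j.factorial : ℝ))⁻¹ * ‖N ^ j *ᵥ x‖) * (t ^ j * Real.exp (μ.re * t)) := by
            rw [Finset.mul_sum]
            refine Finset.sum_congr rfl fun j _ => ?_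
            rw [norm_smul, Real.norm_eq_abs, abs_of_nonneg (by positivity)]
            ring
    have hg : Tendsto (fun t : ℝ => ∑ j ∈ Finset.range k,
        (((j.factorial : ℝ))⁻¹ * ‖N ^ j *ᵥ x‖) * (t ^ j * Real.exp (μ.re * t)))
        atTop (nhds 0) := by
      have := tendsto_finset_sum (Finset.range k)
        (fun j _ => (poly_exp_decay μ.re hμ j).const_mul
          (((j.factorial : ℝ))⁻¹ * ‖N ^ j *ᵥ x‖))
      simpa using this
    exact squeeze_zero_norm' hbound hg
  · simpa using tendsto_const_nhds
  · intro x y hxx hyy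
    have := hxx.add hyy
    rw [add_zero] at this
    refine this.congr fun t => ?_
    rw [Matrix.mulVec_add]

open NormedSpace in
lemma real_decay {n : ℕ} (M : Matrix (Fin n) (Fin n) ℝ)
    (hM : ∀ μ ∈ spectrum ℂ (M.map (Complex.ofReal ·)), μ.re < 0) (v : Fin n → ℝ) :
    Tendsto (fun t : ℝ => exp (t • M) *ᵥ v) atTop (nhds 0) := by
  set Mc : Matrix (Fin n) (Fin n) ℂ := M.map (Complex.ofReal ·) with hMc
  have hmap : ∀ t : ℝ, (exp (t • M)).map (Complex.ofReal ·) = exp (t • Mc) := by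
    intro t
    letI : SeminormedRing (Matrix (Fin n) (Fin n) ℂ) := Matrix.linftyOpSemiNormedRing
    letI : NormedRing (Matrix (Fin n) (Fin n) ℂ) := Matrix.linftyOpNormedRing
    letI : NormedAlgebra ℝ (Matrix (Fin n) (Fin n) ℂ) := Matrix.linftyOpNormedAlgebra
    letI : NormedRing (Matrix (Fin n) (Fin n) ℝ) := Matrix.linftyOpNormedRing
    letI : NormedAlgebra ℝ (Matrix (Fin n) (Fin n) ℝ) := Matrix.linftyOpNormedAlgebra
    let f : Matrix (Fin n) (Fin n) ℝ →+* Matrix (Fin n) (Fin n) ℂ :=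
      Complex.ofRealHom.mapMatrix
    let g : Matrix (Fin n) (Fin n) ℝ →ₗ[ℝ] Matrix (Fin n) (Fin n) ℂ :=
      { toFun := fun E => E.map (Complex.ofReal ·)
        map_add' := fun a b => by ext i j; simp [Matrix.map_apply]
        map_smul' := fun r E => by ext i j; simp [Matrix.map_apply] }
    have hfg : ⇑f = ⇑g := rfl
    have hcont : Continuous f := by rw [hfg]; exact g.continuous_of_finiteDimensional
    have h1 := map_exp f hcont (t • M)
    have h2 : f (t • M) = t • Mc := by
      ext i j; simp [f, Mc, Matrix.map_apply]
    have h3 : f (exp (t • M)) = (exp (t • M)).map (Complex.ofReal ·) := rfl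
    refine h3.symm.trans ?_
    exact h1.trans (congrArg _ h2)
  have hvec : ∀ t : ℝ, (exp (t • Mc)) *ᵥ (fun i => (v i : ℂ))
      = fun i => ((exp (t • M) *ᵥ v) i : ℂ) := by
    intro t
    rw [← hmap t]
    ext i
    simp only [Matrix.mulVec, dotProduct, Matrix.map_apply]
    norm_cast
  have hcomplex := complex_decay Mc hM (fun i => (v i : ℂ))
  rw [tendsto_pi_nhds]
  intro i
  have h1 : Tendsto (fun t : ℝ => (exp (t • Mc) *ᵥ (fun i => (v i : ℂ))) i)
      atTop (nhds 0) := by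
    have := ((continuous_apply i).tendsto (0 : Fin n → ℂ)).comp hcomplex
    simpa [Function.comp_def] using this
  have h2 : Tendsto (fun t : ℝ => ((exp (t • M) *ᵥ v) i : ℂ)) atTop (nhds 0) :=
    h1.congr fun t => congrFun (hvec t) i
  have h3 := (Complex.continuous_re.tendsto 0).comp h2
  simpa [Function.comp_def] using h3

open NormedSpace in
lemma lyap_psd {n : ℕ} (M X C : Matrix (Fin n) (Fin n) ℝ)
    (hM : ∀ μ ∈ spectrum ℂ (M.map (Complex.ofReal ·)), μ.re < 0)
    (hX : X.IsHermitian) (hC : C.PosSemidef)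
    (heq : Mᵀ * X + X * M + C = 0) : X.PosSemidef := by
  refine posSemidef_iff_dotProduct_mulVec.mpr ⟨hX, fun v => ?_⟩
  rw [star_trivial]
  set x : ℝ → (Fin n → ℝ) := fun t => exp (t • M) *ᵥ v with hxdef
  have hx : ∀ t : ℝ, HasDerivAt x (M *ᵥ x t) t := by
    intro t
    letI : NormedRing (Matrix (Fin n) (Fin n) ℝ) := Matrix.linftyOpNormedRing
    letI : NormedAlgebra ℝ (Matrix (Fin n) (Fin n) ℝ) := Matrix.linftyOpNormedAlgebra
    have hE : HasDerivAt (fun s : ℝ => exp (s • M)) (M * exp (t • M)) t :=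
      hasDerivAt_exp_smul_const' M t
    let L : Matrix (Fin n) (Fin n) ℝ →ₗ[ℝ] (Fin n → ℝ) :=
      { toFun := fun E => E *ᵥ v
        map_add' := fun a b => Matrix.add_mulVec a b v
        map_smul' := fun r E => Matrix.smul_mulVec r E v }
    let Lc : Matrix (Fin n) (Fin n) ℝ →L[ℝ] (Fin n → ℝ) :=
      LinearMap.toContinuousLinearMap L
    have h1 := Lc.hasFDerivAt.comp_hasDerivAt t hE
    have h2 : Lc (M * exp (t • M)) = M *ᵥ x t := by
      show (M * exp (t • M)) *ᵥ v = M *ᵥ (exp (t • M) *ᵥ v)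
      rw [Matrix.mulVec_mulVec]
    replace h1 := h1.congr_deriv h2
    exact h1
  set g : ℝ → ℝ := fun t => x t ⬝ᵥ (X *ᵥ x t) with hgdef
  have hgd : ∀ t : ℝ, HasDerivAt g (-(x t ⬝ᵥ (C *ᵥ x t))) t := by
    intro t
    have hxi : ∀ i : Fin n, HasDerivAt (fun s => x s i) ((M *ᵥ x t) i) t := by
      intro i
      have := (ContinuousLinearMap.proj (R := ℝ) (φ := fun _ : Fin n => ℝ)
        i).hasFDerivAt.comp_hasDerivAt t (hx t)
      simpa [Function.comp_def] using this
    have hsum : HasDerivAt (fun s => ∑ p : Fin n × Fin n, x s p.1 * (X p.1 p.2 * x s p.2))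
        (∑ p : Fin n × Fin n, ((M *ᵥ x t) p.1 * (X p.1 p.2 * x t p.2)
          + x t p.1 * (X p.1 p.2 * (M *ᵥ x t) p.2))) t := by
      refine HasDerivAt.fun_sum fun p _ => ?_
      exact (hxi p.1).mul ((hxi p.2).const_mul (X p.1 p.2))
    have hgeq : g = fun s => ∑ p : Fin n × Fin n, x s p.1 * (X p.1 p.2 * x s p.2) := by
      funext s
      show x s ⬝ᵥ (X *ᵥ x s) = _
      simp only [dotProduct, Matrix.mulVec, Finset.mul_sum]
      rw [← Finset.univ_product_univ, Finset.sum_product]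
    have hD : (∑ p : Fin n × Fin n, ((M *ᵥ x t) p.1 * (X p.1 p.2 * x t p.2)
          + x t p.1 * (X p.1 p.2 * (M *ᵥ x t) p.2)))
        = (M *ᵥ x t) ⬝ᵥ (X *ᵥ x t) + x t ⬝ᵥ (X *ᵥ (M *ᵥ x t)) := by
      rw [Finset.sum_add_distrib]
      congr 1 <;>
        · simp only [dotProduct, Matrix.mulVec, Finset.mul_sum]
          rw [← Finset.univ_product_univ, Finset.sum_product]
    have h5 : HasDerivAt g ((M *ᵥ x t) ⬝ᵥ (X *ᵥ x t) + x t ⬝ᵥ (X *ᵥ (M *ᵥ x t))) t := by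
      rw [hgeq, ← hD]; exact hsum
    have claim1 : (M *ᵥ x t) ⬝ᵥ (X *ᵥ x t) = x t ⬝ᵥ ((Mᵀ * X) *ᵥ x t) := by
      have dot_lemma : ∀ (A B : Matrix (Fin n) (Fin n) ℝ) (y : Fin n → ℝ),
          (A *ᵥ y) ⬝ᵥ (B *ᵥ y) = y ⬝ᵥ ((Aᵀ * B) *ᵥ y) := by
        intro A B y
        have hz : A *ᵥ y = y ᵥ* Aᵀ := by
          rw [← Matrix.transpose_transpose A, Matrix.mulVec_transpose,
            Matrix.transpose_transpose]
        rw [hz, Matrix.dotProduct_mulVec, Matrix.vecMul_vecMul, ← Matrix.dotProduct_mulVec]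
      exact dot_lemma M X (x t)
    have claim2 : x t ⬝ᵥ (X *ᵥ (M *ᵥ x t)) = x t ⬝ᵥ ((X * M) *ᵥ x t) := by
      rw [Matrix.mulVec_mulVec]
    have hMX : Mᵀ * X + X * M = -C := eq_neg_of_add_eq_zero_left heq
    rw [claim1, claim2, ← dotProduct_add, ← Matrix.add_mulVec, hMX,
      Matrix.neg_mulVec, dotProduct_neg] at h5
    exact h5
  have hgc : Continuous g :=
    continuous_iff_continuousAt.mpr fun t => (hgd t).differentiableAt.continuousAt
  have hanti : AntitoneOn g (Set.Ici 0) := by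
    refine antitoneOn_of_deriv_nonpos (convex_Ici 0) hgc.continuousOn
      (fun t _ => (hgd t).differentiableAt.differentiableWithinAt) fun t _ => ?_
    rw [(hgd t).deriv]
    have h6 : 0 ≤ x t ⬝ᵥ C *ᵥ x t := by simpa using hC.dotProduct_mulVec_nonneg (x t)
    linarith
  have htend : Tendsto g atTop (nhds 0) := by
    have hx0 : Tendsto x atTop (nhds 0) := real_decay M hM v
    have hΦ : Continuous fun y : Fin n → ℝ => y ⬝ᵥ (X *ᵥ y) := by
      show Continuous fun y : Fin n → ℝ => ∑ i, y i * ∑ j, X i j * y j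
      exact continuous_finset_sum _ fun i _ => (continuous_apply i).mul
        (continuous_finset_sum _ fun j _ => continuous_const.mul (continuous_apply j))
    have := (hΦ.tendsto 0).comp hx0
    simpa [Function.comp_def] using this
  have hle : ∀ᶠ t in atTop, g t ≤ g 0 := by
    filter_upwards [eventually_ge_atTop (0 : ℝ)] with t ht
    exact hanti Set.self_mem_Ici ht ht
  have h7 : (0 : ℝ) ≤ g 0 := le_of_tendsto htend hle
  have h8 : g 0 = v ⬝ᵥ (X *ᵥ v) := by
    show x 0 ⬝ᵥ (X *ᵥ x 0) = _
    have : x 0 = v := by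
      show exp ((0 : ℝ) • M) *ᵥ v = v
      rw [zero_smul, exp_zero, Matrix.one_mulVec]
    rw [this]
  rw [← h8]
  exact h7

/-- the gap P − P⋆ solves a Lyapunov equation, hence P ⪰ P⋆. -/
theorem stmt_17 {n m : ℕ} (hn : 0 < n) (hm : 0 < m)
    (A : Matrix (Fin n) (Fin n) ℝ) (B : Matrix (Fin n) (Fin m) ℝ)
    (Q : Matrix (Fin n) (Fin n) ℝ) (R : Matrix (Fin m) (Fin m) ℝ)
    (hQ : Q.PosDef) (hR : R.PosDef)
    (Pstar : Matrix (Fin n) (Fin n) ℝ) (hPstar : Pstar.PosDef)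
    (hARE : Aᵀ * Pstar + Pstar * A + Q - Pstar * B * R⁻¹ * Bᵀ * Pstar = 0)
    (hHurStar : IsHurwitz (A - B * R⁻¹ * Bᵀ * Pstar))
    (Kstar : Matrix (Fin m) (Fin n) ℝ) (hKstar : Kstar = -(R⁻¹ * Bᵀ * Pstar))
    (K : Matrix (Fin m) (Fin n) ℝ) (hK : IsHurwitz (A + B * K))
    (P : Matrix (Fin n) (Fin n) ℝ) (hP : P.IsHermitian)
    (hLyap : (A + B * K)ᵀ * P + P * (A + B * K) + Q + Kᵀ * R * K = 0) :
    (A + B * K)ᵀ * (P - Pstar) + (P - Pstar) * (A + B * K)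
        + (K - Kstar)ᵀ * R * (K - Kstar) = 0 ∧
      (P - Pstar).PosSemidef := by
  have hRu : IsUnit R.det := hR.det_pos.ne'.isUnit
  have hRR : R * R⁻¹ = 1 := Matrix.mul_nonsing_inv R hRu
  have hRR' : R⁻¹ * R = 1 := Matrix.nonsing_inv_mul R hRu
  have hRT : Rᵀ = R := by simpa using hR.isHermitian.eq
  have hST : R⁻¹ᵀ = R⁻¹ := by rw [Matrix.transpose_nonsing_inv, hRT]
  have hPsT : Pstarᵀ = Pstar := by simpa using hPstar.isHermitian.eq
  have hPT : Pᵀ = P := by simpa using hP.eq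
  have hKT : Kstarᵀ = -(Pstar * B * R⁻¹) := by
    rw [hKstar]; simp [Matrix.transpose_mul, hST, hPsT, Matrix.mul_assoc]
  have hRK : R * Kstar = -(Bᵀ * Pstar) := by
    rw [hKstar]
    rw [Matrix.mul_neg, ← Matrix.mul_assoc, ← Matrix.mul_assoc, hRR]
    simp [Matrix.mul_assoc]
  have hKR : Kstarᵀ * R = -(Pstar * B) := by
    rw [hKT]; rw [Matrix.neg_mul, Matrix.mul_assoc, hRR']; simp
  have hKRK : Kstarᵀ * R * Kstar = Pstar * B * R⁻¹ * Bᵀ * Pstar := by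
    rw [hKR, hKstar]; simp [Matrix.mul_assoc]
  have expand : (K - Kstar)ᵀ * R * (K - Kstar)
      = Kᵀ * R * K - Kᵀ * (R * Kstar) - Kstarᵀ * R * K + Kstarᵀ * R * Kstar := by
    rw [Matrix.transpose_sub, Matrix.sub_mul, Matrix.sub_mul, Matrix.mul_sub,
        Matrix.mul_sub]
    rw [Matrix.mul_assoc Kᵀ R K, Matrix.mul_assoc Kᵀ R Kstar, ← Matrix.mul_assoc Kᵀ R K]
    abel
  have part1 : (A + B * K)ᵀ * (P - Pstar) + (P - Pstar) * (A + B * K)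
      + (K - Kstar)ᵀ * R * (K - Kstar) = 0 := by
    rw [expand, hKRK, hRK, hKR]
    have key : (A + B * K)ᵀ * (P - Pstar) + (P - Pstar) * (A + B * K)
        + (Kᵀ * R * K - Kᵀ * -(Bᵀ * Pstar) - -(Pstar * B) * K
          + Pstar * B * R⁻¹ * Bᵀ * Pstar)
        = ((A + B * K)ᵀ * P + P * (A + B * K) + Q + Kᵀ * R * K)
          - (Aᵀ * Pstar + Pstar * A + Q - Pstar * B * R⁻¹ * Bᵀ * Pstar) := by
      simp only [Matrix.transpose_add, Matrix.transpose_mul, Matrix.mul_neg,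
        Matrix.neg_mul, neg_neg, sub_neg_eq_add, Matrix.add_mul, Matrix.mul_add,
        Matrix.sub_mul, Matrix.mul_sub, Matrix.mul_assoc]
      abel
    rw [key, hLyap, hARE, sub_zero]
  refine ⟨part1, ?_⟩
  have hCpsd : ((K - Kstar)ᵀ * R * (K - Kstar)).PosSemidef := by
    have := hR.posSemidef.conjTranspose_mul_mul_same (K - Kstar)
    rwa [Matrix.conjTranspose_eq_transpose_of_trivial] at this
  exact lyap_psd (A + B * K) (P - Pstar) ((K - Kstar)ᵀ * R * (K - Kstar))
    hK (hP.sub hPstar.isHermitian) hCpsd part1
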